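/- Let x(τ) solve the scalar Riccati-type ODE x' + x = x² + c(τ) on [τ₀, ∞), where 0 ≤ c(τ) ≤ ε e^{−τ} and 0 ≤ x(τ₀) ≤ ε with ε small. Then x(τ) stays nonnegative and satisfies x(τ) ≤ C ε e^{−(1−δ)τ} for any fixed 0 < δ < 1 and sufficiently small ε, with C depending on δ and τ₀. -/

import Mathlib

open Set Real

set_option maxHeartbeats 1000000 in
/-- Decay for the Riccati-type ODE `x' + x = x² + c(τ)` with `0 ≤ c(τ) ≤ ε e^{−τ}`
and `0 ≤ x(τ₀) ≤ ε`: for any fixed `0 < δ < 1` there are `ε₀ > 0` and `C > 0`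
(depending on `δ` and `τ₀`) such that for all `0 < ε ≤ ε₀` the solution stays
nonnegative and satisfies `x(τ) ≤ C ε e^{−(1−δ)τ}`. -/
theorem riccati_decay (τ₀ δ : ℝ) (hδ0 : 0 < δ) (hδ1 : δ < 1) :
    ∃ ε₀ : ℝ, 0 < ε₀ ∧ ∃ C : ℝ, 0 < C ∧
      ∀ (ε : ℝ) (x c : ℝ → ℝ), 0 < ε → ε ≤ ε₀ →
        (∀ τ ∈ Set.Ici τ₀, HasDerivAt x (x τ ^ 2 + c τ - x τ) τ) →
        (∀ τ ∈ Set.Ici τ₀, 0 ≤ c τ ∧ c τ ≤ ε * Real.exp (-τ)) →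
        0 ≤ x τ₀ → x τ₀ ≤ ε →
        ∀ τ ∈ Set.Ici τ₀, 0 ≤ x τ ∧ x τ ≤ C * ε * Real.exp (-(1 - δ) * τ) := by
  set A : ℝ := Real.exp (-δ * τ₀) with hA
  set B₀ : ℝ := Real.exp (-(1 - δ) * τ₀) with hB₀
  have hApos : 0 < A := Real.exp_pos _
  have hB₀pos : 0 < B₀ := Real.exp_pos _
  set C : ℝ := 2 * A / δ + 1 / B₀ with hC
  have hCpos : 0 < C := by positivity
  clear_value A B₀ C
  have hCne : C ≠ 0 := ne_of_gt hCpos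
  have hB₀ne : B₀ ≠ 0 := ne_of_gt hB₀pos
  have hδne : δ ≠ 0 := ne_of_gt hδ0
  refine ⟨A / (2 * C ^ 2 * B₀),
    div_pos hApos (by positivity), C, hCpos, ?_⟩
  intro ε x c hε hεε₀ hode hc hx0 hxε
  -- Nonnegativity: `g τ = e^τ x τ` is monotone on `Ici τ₀`.
  have hg : ∀ τ ∈ Set.Ici τ₀,
      HasDerivAt (fun s => Real.exp s * x s) (Real.exp τ * (x τ ^ 2 + c τ)) τ := by
    intro τ hτ
    have := (Real.hasDerivAt_exp τ).mul (hode τ hτ)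
    exact this.congr_deriv (by ring)
  have hmono : MonotoneOn (fun s => Real.exp s * x s) (Set.Ici τ₀) := by
    apply monotoneOn_of_deriv_nonneg (convex_Ici τ₀)
    · exact fun s hs => ((hg s hs).continuousAt).continuousWithinAt
    · intro s hs
      rw [interior_Ici] at hs
      exact ((hg s (le_of_lt hs : τ₀ ≤ s)).differentiableAt).differentiableWithinAt
    · intro s hs
      rw [interior_Ici] at hs
      rw [(hg s (le_of_lt hs : τ₀ ≤ s)).deriv]
      have hc' := hc s (le_of_lt hs : τ₀ ≤ s)
      have : 0 ≤ x s ^ 2 + c s := by nlinarith [hc'.1, sq_nonneg (x s)]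
      positivity
  have hnonneg : ∀ τ ∈ Set.Ici τ₀, 0 ≤ x τ := by
    intro τ hτ
    have h1 : Real.exp τ₀ * x τ₀ ≤ Real.exp τ * x τ :=
      hmono (Set.self_mem_Ici) hτ hτ
    have h2 : 0 ≤ Real.exp τ₀ * x τ₀ := by positivity
    nlinarith [Real.exp_pos τ]
  intro τ hτ
  refine ⟨hnonneg τ hτ, ?_⟩
  -- Upper bound via the fencing theorem on `[τ₀, τ]`.
  have key : ∀ ⦃s⦄, s ∈ Set.Icc τ₀ τ → x s ≤ C * ε * Real.exp (-(1 - δ) * s) := by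
    apply image_le_of_deriv_right_lt_deriv_boundary
      (f' := fun s => x s ^ 2 + c s - x s) (B := fun s => C * ε * Real.exp (-(1 - δ) * s))
      (B' := fun s => C * ε * (Real.exp (-(1 - δ) * s) * -(1 - δ)))
    · intro s hs
      exact ((hode s hs.1).continuousAt).continuousWithinAt
    · intro s hs
      exact (hode s hs.1).hasDerivWithinAt
    · -- x τ₀ ≤ C ε B₀
      have hCB : 1 ≤ C * B₀ := by
        rw [hC]
        have : (1 / B₀) * B₀ = 1 := by field_simp
        nlinarith [mul_pos (mul_pos two_pos hApos) hB₀pos, div_pos (mul_pos two_pos hApos) hδ0]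
      calc x τ₀ ≤ ε := hxε
        _ ≤ C * ε * B₀ := by nlinarith
        _ = C * ε * Real.exp (-(1 - δ) * τ₀) := by rw [hB₀]
    · intro s
      have h := (((hasDerivAt_id s).const_mul (-(1 - δ))).exp).const_mul (C * ε)
      simpa using h
    · intro s hs heq
      have hs1 : τ₀ ≤ s := hs.1
      set e : ℝ := Real.exp (-(1 - δ) * s) with he
      clear_value e
      have hepos : 0 < e := he ▸ Real.exp_pos _
      have heB₀ : e ≤ B₀ := by
        rw [he, hB₀]
        apply Real.exp_le_exp.2
        nlinarith
      have hcs : c s ≤ ε * A * e := by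
        have h1 := (hc s hs1).2
        have h2 : Real.exp (-s) = Real.exp (-δ * s) * e := by
          rw [he, ← Real.exp_add]; ring_nf
        have h3 : Real.exp (-δ * s) ≤ A := by
          rw [hA]
          apply Real.exp_le_exp.2
          nlinarith
        calc c s ≤ ε * Real.exp (-s) := h1
          _ = ε * (Real.exp (-δ * s) * e) := by rw [h2]
          _ ≤ ε * (A * e) := by
              apply mul_le_mul_of_nonneg_left _ (le_of_lt hε)
              exact mul_le_mul_of_nonneg_right h3 (le_of_lt hepos)
          _ = ε * A * e := by ring
      rw [heq]
      -- need : (Cεe)² + c s - Cεe < Cε(e·-(1-δ)), i.e. C²ε²e² + c s < δ C ε e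
      have hεsmall : C ^ 2 * ε * B₀ ≤ A / 2 := by
        calc C ^ 2 * ε * B₀ = C ^ 2 * B₀ * ε := by ring
          _ ≤ C ^ 2 * B₀ * (A / (2 * C ^ 2 * B₀)) :=
              mul_le_mul_of_nonneg_left hεε₀ (by positivity)
          _ = A / 2 := by field_simp
      have hδC : δ * C = 2 * A + δ / B₀ := by
        rw [hC]; field_simp
      have h1 : C ^ 2 * ε ^ 2 * e ^ 2 ≤ A / 2 * ε * e := by
        have hle : C ^ 2 * ε * e ≤ A / 2 := by
          calc C ^ 2 * ε * e ≤ C ^ 2 * ε * B₀ := by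
                nlinarith [heB₀, mul_pos (pow_pos hCpos 2) hε]
            _ ≤ A / 2 := hεsmall
        have := mul_le_mul_of_nonneg_right hle (le_of_lt (mul_pos hε hepos))
        nlinarith [this]
      have h3 : δ * C * (ε * e) = (2 * A + δ / B₀) * (ε * e) := by rw [hδC]
      nlinarith [h1, hcs, h3, mul_pos (div_pos hδ0 hB₀pos) (mul_pos hε hepos),
        mul_pos (mul_pos hApos hε) hepos]
  exact key ⟨hτ, le_refl τ⟩
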